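/- Let Z be a convex set and y ∈ Z. Suppose x' = y - k·(y - x) for some x ∈ Z, x' ∈ Z and k ≥ 1. Then t_y(x') ≤ t_y(x). -/

import Mathlib

/-- The weight function `t_y(x) = sup{ t ∈ [0,1) : (y - t·x)/(1-t) ∈ Z }`. -/
noncomputable def weight {V : Type*} [AddCommGroup V] [Module ℝ V] (Z : Set V) (y x : V) : ℝ :=
  sSup {t : ℝ | 0 ≤ t ∧ t < 1 ∧ (1 - t)⁻¹ • (y - t • x) ∈ Z}

theorem weight_antitone_on_ray {V : Type*} [AddCommGroup V] [Module ℝ V]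
    (Z : Set V) (hZ : Convex ℝ Z) (y : V) (hy : y ∈ Z)
    (x x' : V) (hx : x ∈ Z) (hx' : x' ∈ Z) (k : ℝ) (hk : 1 ≤ k)
    (hray : x' = y - k • (y - x)) :
    weight Z y x' ≤ weight Z y x := by
  subst hray
  unfold weight
  set S := {t : ℝ | 0 ≤ t ∧ t < 1 ∧ (1 - t)⁻¹ • (y - t • x) ∈ Z} with hS
  set S' := {t : ℝ | 0 ≤ t ∧ t < 1 ∧ (1 - t)⁻¹ • (y - t • (y - k • (y - x))) ∈ Z} with hS'
  have hbdd : BddAbove S := ⟨1, fun t ht => le_of_lt ht.2.1⟩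
  have h0S : (0:ℝ) ∈ S := ⟨le_refl _, one_pos, by simp [hy]⟩
  have hsub : S' ⊆ S := by
    rintro t ⟨ht0, ht1, hz'⟩
    have h1t : (0:ℝ) < 1 - t := by linarith
    have hd : 0 < 1 - t + t * k := by nlinarith
    refine ⟨ht0, ht1, ?_⟩
    have ha : (0:ℝ) ≤ 1 / (1 - t + t * k) := div_nonneg one_pos.le hd.le
    have hb : (0:ℝ) ≤ t * (k - 1) / (1 - t + t * k) :=
      div_nonneg (mul_nonneg ht0 (by linarith)) hd.le
    have h1 : (1 - t) ≠ 0 := h1t.ne'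
    have h2 : (1 - t + t * k) ≠ 0 := hd.ne'
    have hab : 1 / (1 - t + t * k) + t * (k - 1) / (1 - t + t * k) = 1 := by
      rw [← add_div, div_eq_one_iff_eq h2]
      ring
    have hcomb := hZ hz' hx ha hb hab
    convert hcomb using 1
    match_scalars <;> field_simp <;> ring
  rcases Set.eq_empty_or_nonempty S' with he | hne
  · rw [he, Real.sSup_empty]
    exact le_csSup hbdd h0S
  · exact csSup_le_csSup hbdd hne hsub
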